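/- Suppose G_1,…,G_n (n ≥ 2) are vertex-disjoint graphs, each G_i containing a clique K_i = {u_{i,1},…,u_{i,p}}, and G is the K_p-gluing obtained by identifying u_{1,q},…,u_{n,q} as u_q for each q ∈ [p]. Then P_DP(G,m) ≤ (∏_{i=1}^n P'_DP(G_i,K_i,m)) / (∏_{i=0}^{p-1}(m-i))^{n-1} for all m ≥ p. -/

import Mathlib

open SimpleGraph

/-- An `m`-fold cover of a graph `G`, with lists canonically labeled by `Fin m`. -/
structure DPCover {V : Type} (G : SimpleGraph V) (m : ℕ) where
  H : SimpleGraph (V × Fin m)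
  part_complete : ∀ (v : V) (a b : Fin m), a ≠ b → H.Adj (v, a) (v, b)
  cross : ∀ (u v : V) (a b : Fin m), u ≠ v → H.Adj (u, a) (v, b) → G.Adj u v
  matching_right : ∀ (u v : V) (a b b' : Fin m), u ≠ v →
    H.Adj (u, a) (v, b) → H.Adj (u, a) (v, b') → b = b'
  matching_left : ∀ (u v : V) (a a' b : Fin m), u ≠ v →
    H.Adj (u, a) (v, b) → H.Adj (u, a') (v, b) → a = a'

/-- A cover is full if every matching between lists of adjacent vertices is perfect. -/
def DPCover.IsFull {V : Type} {G : SimpleGraph V} {m : ℕ} (C : DPCover G m) : Prop :=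
  ∀ u v : V, G.Adj u v → ∀ a : Fin m, ∃ b : Fin m, C.H.Adj (u, a) (v, b)

/-- An `H`-coloring: a choice of one list element per vertex forming an independent set. -/
def DPCover.IsColoring {V : Type} {G : SimpleGraph V} {m : ℕ} (C : DPCover G m)
    (c : V → Fin m) : Prop :=
  ∀ u v : V, ¬ C.H.Adj (u, c u) (v, c v)

/-- The number of `H`-colorings of `G` with respect to the cover `C`. -/
noncomputable def dpCount {V : Type} {G : SimpleGraph V} {m : ℕ} (C : DPCover G m) : ℕ :=
  Nat.card {c : V → Fin m // C.IsColoring c}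

/-- `N(P, C)`: the number of `H`-colorings containing the set `P` of cover vertices. -/
noncomputable def NCount {V : Type} {G : SimpleGraph V} {m : ℕ} (C : DPCover G m)
    (P : Set (V × Fin m)) : ℕ :=
  Nat.card {c : V → Fin m // C.IsColoring c ∧ ∀ p ∈ P, c p.1 = p.2}

/-- The DP color function: minimum number of colorings over all `m`-fold covers. -/
noncomputable def PDP {V : Type} (G : SimpleGraph V) (m : ℕ) : ℕ :=
  sInf {n : ℕ | ∃ C : DPCover G m, dpCount C = n}

/-- The number of proper `m`-colorings (the chromatic polynomial evaluated at `m`). -/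
noncomputable def properCount {V : Type} (G : SimpleGraph V) (m : ℕ) : ℕ :=
  Nat.card {c : V → Fin m // ∀ u v : V, G.Adj u v → c u ≠ c v}

/-- A cover has a canonical labeling if lists can be renamed so all cross edges are
`(u,j)(v,j)`. -/
def DPCover.HasCanonicalLabeling {V : Type} {G : SimpleGraph V} {m : ℕ}
    (C : DPCover G m) : Prop :=
  ∃ σ : V → Equiv.Perm (Fin m), ∀ u v : V, G.Adj u v → ∀ j : Fin m,
    C.H.Adj (u, σ u j) (v, σ v j)

/-- `G` (on vertex set `W`) is a `K_p`-gluing of the vertex-disjoint graphs `Gs i`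
along the cliques `u i : Fin p → V i`, via the identification maps `φ i`. -/
structure IsCliqueGluing {n p : ℕ} {V : Fin n → Type} {W : Type}
    (Gs : ∀ i, SimpleGraph (V i)) (u : ∀ i, Fin p → V i)
    (G : SimpleGraph W) (φ : ∀ i, V i → W) : Prop where
  phi_inj : ∀ i, Function.Injective (φ i)
  u_inj : ∀ i, Function.Injective (u i)
  clique : ∀ i (q q' : Fin p), q ≠ q' → (Gs i).Adj (u i q) (u i q')
  glue : ∀ i j q, φ i (u i q) = φ j (u j q)
  covers : ∀ w : W, ∃ i x, φ i x = w
  inter : ∀ i j x y, i ≠ j → φ i x = φ j y → ∃ q, x = u i q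
  embed : ∀ i x y, G.Adj (φ i x) (φ i y) ↔ (Gs i).Adj x y
  no_extra : ∀ i j x y, i ≠ j → G.Adj (φ i x) (φ j y) →
    (∃ q, x = u i q) ∧ (∃ q', y = u j q')

/-- A cover is conducive to a clique `k : Fin p → V` if it is full and the induced
subcover on the clique admits a canonical labeling. -/
def DPCover.Conducive {V : Type} {G : SimpleGraph V} {m p : ℕ} (C : DPCover G m)
    (k : Fin p → V) : Prop :=
  C.IsFull ∧ ∃ σ : Fin p → Equiv.Perm (Fin m),
    ∀ q q' : Fin p, q ≠ q' → ∀ j : Fin m, C.H.Adj (k q, σ q j) (k q', σ q' j)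

/-- The `K`-canonical DP color function: the minimum number of colorings over all
`m`-fold covers conducive to the clique `k`. -/
noncomputable def PDPK {V : Type} (G : SimpleGraph V) {p : ℕ} (k : Fin p → V) (m : ℕ) : ℕ :=
  sInf {n : ℕ | ∃ C : DPCover G m, C.Conducive k ∧ dpCount C = n}

/-! ### Auxiliary development for the clique-gluing bound -/

namespace DPGlue

open Function Finset

/-- The identity (canonical) cover of a graph. -/
def idCover {V : Type} (G : SimpleGraph V) (m : ℕ) : DPCover G m where
  H := { Adj := fun x y => (x.1 = y.1 ∧ x.2 ≠ y.2) ∨ (G.Adj x.1 y.1 ∧ x.2 = y.2)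
         symm := by
           constructor
           rintro ⟨u, a⟩ ⟨v, b⟩ (⟨h1, h2⟩ | ⟨h1, h2⟩)
           · exact Or.inl ⟨h1.symm, h2.symm⟩
           · exact Or.inr ⟨h1.symm, h2.symm⟩
         loopless := by
           constructor
           rintro ⟨u, a⟩ (⟨_, h2⟩ | ⟨h1, _⟩)
           · exact h2 rfl
           · exact G.loopless.irrefl u h1 }
  part_complete := fun v a b hab => Or.inl ⟨rfl, hab⟩
  cross := by
    rintro u v a b huv (⟨h1, _⟩ | ⟨h1, _⟩)
    · exact absurd h1 huv
    · exact h1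
  matching_right := by
    rintro u v a b b' huv (⟨h1, _⟩ | ⟨_, h2⟩) (⟨h1', _⟩ | ⟨_, h2'⟩)
    · exact absurd h1 huv
    · exact absurd h1 huv
    · exact absurd h1' huv
    · exact h2.symm.trans h2'
  matching_left := by
    rintro u v a a' b huv (⟨h1, _⟩ | ⟨_, h2⟩) (⟨h1', _⟩ | ⟨_, h2'⟩)
    · exact absurd h1 huv
    · exact absurd h1 huv
    · exact absurd h1' huv
    · exact h2.trans h2'.symm

lemma idCover_conducive {V : Type} (G : SimpleGraph V) (m p : ℕ) (k : Fin p → V)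
    (hk : ∀ q q', q ≠ q' → G.Adj (k q) (k q')) : (idCover G m).Conducive k :=
  ⟨fun u v hadj a => ⟨a, Or.inr ⟨hadj, rfl⟩⟩, fun _ => 1,
    fun q q' hqq' j => Or.inr ⟨hk q q' hqq', rfl⟩⟩

/-- `Nat.card` of a sigma type over a `Fintype` index. -/
lemma card_sigma' {β : Type} [Fintype β] (γ : β → Type) [∀ b, Finite (γ b)] :
    Nat.card ((b : β) × γ b) = ∑ b, Nat.card (γ b) := by
  classical
  letI : ∀ b, Fintype (γ b) := fun b => Fintype.ofFinite _
  simp [Nat.card_eq_fintype_card, Fintype.card_sigma]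

/-- Partitioning a count according to the value of a function. -/
lemma card_partition {α : Type} [Finite α] {β : Type} [Fintype β] (P : α → Prop) (r : α → β) :
    Nat.card {a // P a} = ∑ b : β, Nat.card {a // P a ∧ r a = b} := by
  calc Nat.card {a // P a}
      = Nat.card ((b : β) × {a // P a ∧ r a = b}) :=
        Nat.card_congr ((Equiv.sigmaFiberEquiv fun a : {a // P a} => r a.1).symm.trans
          (Equiv.sigmaCongrRight fun b =>
            Equiv.subtypeSubtypeEquivSubtypeInter P fun a => r a = b))
    _ = ∑ b, Nat.card {a // P a ∧ r a = b} := card_sigma' _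

/-- The number of permutations of `Fin m` extending a given injection `Fin p → Fin m`. -/
lemma card_perm_comp {p m : ℕ} {f g : Fin p → Fin m} (hf : Injective f) (hg : Injective g) :
    Nat.card {τ : Equiv.Perm (Fin m) // ⇑τ ∘ f = g} = Nat.factorial (m - p) := by
  classical
  let e0 : (Set.range f) ≃ (Set.range g) :=
    (Equiv.ofInjective f hf).symm.trans (Equiv.ofInjective g hg)
  have key : {τ : Equiv.Perm (Fin m) // ⇑τ ∘ f = g} ≃
      (((Set.range f)ᶜ : Set (Fin m)) ≃ ((Set.range g)ᶜ : Set (Fin m))) := by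
    refine (Equiv.subtypeEquivRight ?_).trans (Equiv.Set.compl e0)
    intro τ
    rw [funext_iff]
    constructor
    · rintro ht ⟨x, q, rfl⟩
      simpa [e0] using ht q
    · intro ht q
      simpa [e0] using ht ⟨f q, q, rfl⟩
  have h1 : Fintype.card ((Set.range f)ᶜ : Set (Fin m)) = m - p := by
    rw [Fintype.card_compl_set, Set.card_range_of_injective hf]; simp
  have h2 : Fintype.card ((Set.range g)ᶜ : Set (Fin m)) = m - p := by
    rw [Fintype.card_compl_set, Set.card_range_of_injective hg]; simp
  rw [Nat.card_congr key, Nat.card_eq_fintype_card,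
    Fintype.card_equiv (Fintype.equivOfCardEq (h1.trans h2.symm)), h1]

/-- Summing a function of `τ ∘ f` over all permutations `τ`. -/
lemma sum_perm_comp {p m : ℕ} (M : (Fin p → Fin m) → ℕ)
    (hM : ∀ g, ¬ Injective g → M g = 0) {f : Fin p → Fin m} (hf : Injective f) :
    ∑ τ : Equiv.Perm (Fin m), M (⇑τ ∘ f) = Nat.factorial (m - p) * ∑ g : Fin p → Fin m, M g := by
  classical
  rw [← Finset.sum_fiberwise_of_maps_to' (g := fun τ : Equiv.Perm (Fin m) => ⇑τ ∘ f)
    (t := Finset.univ) (fun _ _ => Finset.mem_univ _) M, Finset.mul_sum]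
  refine Finset.sum_congr rfl fun g _ => ?_
  rw [Finset.sum_const, smul_eq_mul]
  by_cases hg : Injective g
  · congr 1
    rw [← Fintype.card_subtype, ← Nat.card_eq_fintype_card, card_perm_comp hf hg]
  · rw [hM g hg, mul_zero, mul_zero]

open scoped Classical in
/-- The number of injections `Fin p → Fin m`. -/
lemma card_injective (p m : ℕ) :
    (Finset.univ.filter (fun f : Fin p → Fin m => Injective f)).card = m.descFactorial p := by
  rw [← Fintype.card_subtype,
    Fintype.card_congr (Equiv.subtypeInjectiveEquivEmbedding (Fin p) (Fin m)),
    Fintype.card_embedding_eq, Fintype.card_fin, Fintype.card_fin]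

section Gluing

variable {n p m : ℕ} {V : Fin n → Type} {W : Type}
  {Gs : ∀ i, SimpleGraph (V i)}
  {G : SimpleGraph W} {φ : ∀ i, V i → W}

/-- The relabelling permutation used at each vertex of `V i`. -/
noncomputable def pim (u : ∀ i : Fin n, Fin p → V i)
    (σ : ∀ _ : Fin n, Fin p → Equiv.Perm (Fin m))
    (τ : Fin n → Equiv.Perm (Fin m)) (i : Fin n) (v : V i) : Equiv.Perm (Fin m) :=
  @dite _ (∃ q, u i q = v) (Classical.propDecidable _)
    (fun hv => σ i hv.choose * τ i) (fun _ => τ i)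

lemma pim_u {u : ∀ i, Fin p → V i} {σ : ∀ i, Fin p → Equiv.Perm (Fin m)}
    {τ : Fin n → Equiv.Perm (Fin m)} (h : IsCliqueGluing Gs u G φ) (i : Fin n) (q : Fin p) :
    pim u σ τ i (u i q) = σ i q * τ i := by
  classical
  rw [pim, dif_pos ⟨q, rfl⟩]
  have hq : (⟨q, rfl⟩ : ∃ q', u i q' = u i q).choose = q :=
    h.u_inj i (⟨q, rfl⟩ : ∃ q', u i q' = u i q).choose_spec
  rw [hq]

lemma mem_clique_of_cross {u : ∀ i, Fin p → V i} (h : IsCliqueGluing Gs u G φ)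
    {i j : Fin n} {x : V i} {y : V j} (hij : i ≠ j) (hxy : φ i x = φ j y) :
    ∃ q, x = u i q ∧ y = u j q := by
  obtain ⟨q, rfl⟩ := h.inter i j x y hij hxy
  exact ⟨q, rfl, h.phi_inj j (hxy.symm.trans (h.glue i j q))⟩

variable (u : ∀ i, Fin p → V i) (C : ∀ i, DPCover (Gs i) m)
  (σ : ∀ i, Fin p → Equiv.Perm (Fin m)) (τ : Fin n → Equiv.Perm (Fin m))

/-- The glued cover graph. -/
noncomputable def gluedH : SimpleGraph (W × Fin m) where
  Adj x y := (x.1 = y.1 ∧ x.2 ≠ y.2) ∨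
    (x.1 ≠ y.1 ∧ ∃ i a b, φ i a = x.1 ∧ φ i b = y.1 ∧
      (C i).H.Adj (a, pim u σ τ i a x.2) (b, pim u σ τ i b y.2))
  symm := by
    constructor
    rintro ⟨w, α⟩ ⟨w', β⟩ (⟨h1, h2⟩ | ⟨h1, i, a, b, ha, hb, had⟩)
    · exact Or.inl ⟨h1.symm, h2.symm⟩
    · exact Or.inr ⟨h1.symm, i, b, a, hb, ha, (C i).H.symm.symm _ _ had⟩
  loopless := by
    constructor
    rintro ⟨w, α⟩ (⟨_, h2⟩ | ⟨h1, _⟩)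
    · exact h2 rfl
    · exact h1 rfl

variable {u}
variable (h : IsCliqueGluing Gs u G φ)
  (hσ : ∀ (i : Fin n) (q q' : Fin p), q ≠ q' → ∀ j,
    (C i).H.Adj (u i q, σ i q j) (u i q', σ i q' j))

include h hσ in
lemma clique_force {i : Fin n} {q q' : Fin p} (hqq' : q ≠ q') {a b : Fin m}
    (had : (C i).H.Adj (u i q, pim u σ τ i (u i q) a) (u i q', pim u σ τ i (u i q') b)) :
    a = b := by
  rw [pim_u h, pim_u h] at had
  simp only [Equiv.Perm.mul_apply] at had
  have h2 := hσ i q q' hqq' (τ i a)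
  have hne : u i q ≠ u i q' := fun e => hqq' (h.u_inj i e)
  have h3 := (C i).matching_right _ _ _ _ _ hne had h2
  exact ((τ i).injective ((σ i q').injective h3)).symm

include h hσ in
/-- The glued cover of `G`. -/
noncomputable def gluedCover : DPCover G m where
  H := gluedH u C σ τ
  part_complete := fun v a b hab => Or.inl ⟨rfl, hab⟩
  cross := by
    rintro w w' a b hww (⟨h1, _⟩ | ⟨_, i, x, y, hx, hy, had⟩)
    · exact absurd h1 hww
    · replace hx : φ i x = w := hx
      replace hy : φ i y = w' := hy
      have hxy : x ≠ y := fun e => hww (by rw [← hx, ← hy, e])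
      rw [← hx, ← hy]
      exact (h.embed i x y).2 ((C i).cross _ _ _ _ hxy had)
  matching_right := by
    rintro w w' a b b' hww (⟨h1, _⟩ | ⟨_, i, x, y, hx, hy, had⟩) had2
    · exact absurd h1 hww
    rcases had2 with ⟨h1, _⟩ | ⟨_, i', x', y', hx', hy', had'⟩
    · exact absurd h1 hww
    replace hx : φ i x = w := hx
    replace hy : φ i y = w' := hy
    replace hx' : φ i' x' = w := hx'
    replace hy' : φ i' y' = w' := hy'
    have hxy : x ≠ y := fun e => hww (by rw [← hx, ← hy, e])
    by_cases hii : i = i'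
    · subst hii
      rw [h.phi_inj i (hx'.trans hx.symm), h.phi_inj i (hy'.trans hy.symm)] at had'
      exact (pim u σ τ i y).injective ((C i).matching_right _ _ _ _ _ hxy had had')
    · obtain ⟨qx, hxq, hxq'⟩ := mem_clique_of_cross h hii (hx.trans hx'.symm)
      obtain ⟨qy, hyq, hyq'⟩ := mem_clique_of_cross h hii (hy.trans hy'.symm)
      have hq : qx ≠ qy := fun e => hxy (by rw [hxq, hyq, e])
      rw [hxq, hyq] at had
      rw [hxq', hyq'] at had'
      exact (clique_force C σ τ h hσ hq had).symm.trans (clique_force C σ τ h hσ hq had')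
  matching_left := by
    rintro w w' a a' b hww (⟨h1, _⟩ | ⟨_, i, x, y, hx, hy, had⟩) had2
    · exact absurd h1 hww
    rcases had2 with ⟨h1, _⟩ | ⟨_, i', x', y', hx', hy', had'⟩
    · exact absurd h1 hww
    replace hx : φ i x = w := hx
    replace hy : φ i y = w' := hy
    replace hx' : φ i' x' = w := hx'
    replace hy' : φ i' y' = w' := hy'
    have hxy : x ≠ y := fun e => hww (by rw [← hx, ← hy, e])
    by_cases hii : i = i'
    · subst hii
      rw [h.phi_inj i (hx'.trans hx.symm), h.phi_inj i (hy'.trans hy.symm)] at had'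
      exact (pim u σ τ i x).injective ((C i).matching_left _ _ _ _ _ hxy had had')
    · obtain ⟨qx, hxq, hxq'⟩ := mem_clique_of_cross h hii (hx.trans hx'.symm)
      obtain ⟨qy, hyq, hyq'⟩ := mem_clique_of_cross h hii (hy.trans hy'.symm)
      have hq : qx ≠ qy := fun e => hxy (by rw [hxq, hyq, e])
      rw [hxq, hyq] at had
      rw [hxq', hyq'] at had'
      exact (clique_force C σ τ h hσ hq had).trans (clique_force C σ τ h hσ hq had').symm

lemma glued_isColoring_iff (c : W → Fin m) :
    (gluedCover C σ τ h hσ).IsColoring c ↔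
      ∀ i, (C i).IsColoring (fun x => pim u σ τ i x (c (φ i x))) := by
  constructor
  · intro hc i x y had
    by_cases hxy : φ i x = φ i y
    · have hxy' : x = y := h.phi_inj i hxy
      subst hxy'
      exact (C i).H.loopless.irrefl _ had
    · exact hc (φ i x) (φ i y) (Or.inr ⟨hxy, i, x, y, rfl, rfl, had⟩)
  · intro hC w w' had
    rcases had with ⟨h1, h2⟩ | ⟨_, i, x, y, hx, hy, had⟩
    · replace h1 : w = w' := h1
      exact h2 (show c w = c w' by rw [h1])
    · subst hx; subst hy
      exact hC i x y had

/-- The number of colorings of `C i` whose clique colors are `σ i q (g q)`. -/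
noncomputable def Mcount (i : Fin n) (g : Fin p → Fin m) : ℕ :=
  Nat.card {c : V i → Fin m // (C i).IsColoring c ∧ ∀ q, c (u i q) = σ i q (g q)}

lemma dpCount_eq_sum_Mcount [∀ i, Fintype (V i)] (i : Fin n) :
    dpCount (C i) = ∑ g : Fin p → Fin m, Mcount (u := u) C σ i g := by
  rw [dpCount, card_partition ((C i).IsColoring)
    (fun c => fun q => (σ i q).symm (c (u i q)))]
  refine Finset.sum_congr rfl fun g _ => Nat.card_congr (Equiv.subtypeEquivRight fun c => ?_)
  rw [and_congr_right_iff]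
  intro _
  rw [funext_iff]
  exact forall_congr' fun q => Equiv.symm_apply_eq _

include hσ in
lemma Mcount_eq_zero {i : Fin n} {g : Fin p → Fin m} (hg : ¬ Injective g) :
    Mcount (u := u) C σ i g = 0 := by
  obtain ⟨q, q', heq, hne⟩ := Function.not_injective_iff.mp hg
  have : IsEmpty {c : V i → Fin m // (C i).IsColoring c ∧ ∀ q, c (u i q) = σ i q (g q)} := by
    constructor
    rintro ⟨c, hcol, hcl⟩
    have had := hσ i q q' hne (g q)
    rw [show σ i q' (g q) = σ i q' (g q') by rw [heq]] at had
    exact hcol (u i q) (u i q') (by rw [hcl q, hcl q']; exact had)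
  exact Nat.card_of_isEmpty

section Count

variable [∀ i, Fintype (V i)] [Fintype W]

lemma card_fiber (i0 : Fin n) (f : Fin p → Fin m) :
    Nat.card {c : W → Fin m // (gluedCover C σ τ h hσ).IsColoring c ∧
        (fun q => c (φ i0 (u i0 q))) = f}
      = ∏ i, Mcount (u := u) C σ i (⇑(τ i) ∘ f) := by
  rw [show (∏ i, Mcount (u := u) C σ i (⇑(τ i) ∘ f)) = Nat.card
      (∀ i, {ci : V i → Fin m // (C i).IsColoring ci ∧
        ∀ q, ci (u i q) = σ i q ((⇑(τ i) ∘ f) q)}) from (Nat.card_pi).symm]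
  refine Nat.card_eq_of_bijective
    (fun c i => ⟨fun x => pim u σ τ i x (c.1 (φ i x)), ?_, ?_⟩) ⟨?_, ?_⟩
  · exact (glued_isColoring_iff C σ τ h hσ c.1).mp c.2.1 i
  · intro q
    show pim u σ τ i (u i q) (c.1 (φ i (u i q))) = σ i q ((⇑(τ i) ∘ f) q)
    have hgl : φ i (u i q) = φ i0 (u i0 q) := h.glue i i0 q
    have hcq : c.1 (φ i0 (u i0 q)) = f q := congrFun c.2.2 q
    rw [hgl, hcq, pim_u h]
    rfl
  · intro c c' hcc
    refine Subtype.ext (funext fun w => ?_)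
    obtain ⟨i, x, rfl⟩ := h.covers w
    have hx := congrFun (congrArg Subtype.val (congrFun hcc i)) x
    exact (pim u σ τ i x).injective hx
  · intro d
    have hw : ∀ w : W, ∃ j : Σ i, V i, φ j.1 j.2 = w := by
      intro w
      obtain ⟨i, x, hx⟩ := h.covers w
      exact ⟨⟨i, x⟩, hx⟩
    set c : W → Fin m := fun w =>
      (pim u σ τ (hw w).choose.1 (hw w).choose.2).symm
        ((d (hw w).choose.1).1 (hw w).choose.2) with hcdef
    have wdpair : ∀ (i : Fin n) (x : V i) (j : Fin n) (y : V j), φ i x = φ j y →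
        (pim u σ τ i x).symm ((d i).1 x) = (pim u σ τ j y).symm ((d j).1 y) := by
      intro i x j y hxy
      by_cases hij : i = j
      · subst hij
        rw [h.phi_inj i hxy]
      · obtain ⟨q, hxq, hyq⟩ := mem_clique_of_cross h hij hxy
        subst hxq; subst hyq
        rw [pim_u h, pim_u h, (d i).2.2 q, (d j).2.2 q]
        have e1 : ∀ k : Fin n, (σ k q * τ k).symm (σ k q ((⇑(τ k) ∘ f) q)) = f q := by
          intro k
          rw [Equiv.symm_apply_eq]
          rfl
        rw [e1, e1]
    have wd : ∀ (i : Fin n) (x : V i),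
        c (φ i x) = (pim u σ τ i x).symm ((d i).1 x) := by
      intro i x
      exact wdpair (hw (φ i x)).choose.1 (hw (φ i x)).choose.2 i x (hw (φ i x)).choose_spec
    have hfun : ∀ i, (fun x => pim u σ τ i x (c (φ i x))) = (d i).1 := by
      intro i
      funext x
      rw [wd i x, Equiv.apply_symm_apply]
    refine ⟨⟨c, ?_, ?_⟩, ?_⟩
    · rw [glued_isColoring_iff C σ τ h hσ c]
      intro i
      rw [hfun i]
      exact (d i).2.1
    · funext q
      rw [wd i0 (u i0 q), pim_u h, (d i0).2.2 q]
      rw [Equiv.symm_apply_eq]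
      rfl
    · funext i
      refine Subtype.ext (funext fun x => ?_)
      show pim u σ τ i x (c (φ i x)) = (d i).1 x
      rw [wd i x, Equiv.apply_symm_apply]

lemma dpCount_glued (i0 : Fin n) :
    dpCount (gluedCover C σ τ h hσ) =
      ∑ f : Fin p → Fin m, ∏ i, Mcount (u := u) C σ i (⇑(τ i) ∘ f) := by
  rw [dpCount, card_partition ((gluedCover C σ τ h hσ).IsColoring)
    (fun c : W → Fin m => fun q => c (φ i0 (u i0 q)))]
  exact Finset.sum_congr rfl fun f _ => card_fiber C σ τ h hσ i0 f

end Count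

end Gluing

end DPGlue


theorem PDP_cliqueGluing_le_PDPK {n p m : ℕ} (hn : 2 ≤ n) (hm : p ≤ m)
    {V : Fin n → Type} [∀ i, Fintype (V i)] {W : Type} [Fintype W]
    (Gs : ∀ i, SimpleGraph (V i)) (u : ∀ i, Fin p → V i)
    (G : SimpleGraph W) (φ : ∀ i, V i → W)
    (h : IsCliqueGluing Gs u G φ) :
    PDP G m * (∏ i ∈ Finset.range p, (m - i)) ^ (n - 1) ≤
      ∏ i : Fin n, PDPK (Gs i) (u i) m := by
  classical
  have hn0 : 0 < n := by omega
  set i0 : Fin n := ⟨0, hn0⟩ with hi0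
  -- choose minimizing conducive covers
  have hex : ∀ i, ∃ C : DPCover (Gs i) m, C.Conducive (u i) ∧
      dpCount C = PDPK (Gs i) (u i) m := by
    intro i
    have hne : {t : ℕ | ∃ C : DPCover (Gs i) m, C.Conducive (u i) ∧ dpCount C = t}.Nonempty :=
      ⟨dpCount (DPGlue.idCover (Gs i) m), DPGlue.idCover (Gs i) m,
        DPGlue.idCover_conducive (Gs i) m p (u i) (fun q q' hq => h.clique i q q' hq), rfl⟩
    exact Nat.sInf_mem hne
  choose C hC hval using hex
  choose σ hσ using fun i => (hC i).2
  set F := m.descFactorial p with hF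
  set E := Nat.factorial (m - p) with hE
  set R := ∏ i : Fin n, dpCount (C i) with hR
  set A : (Fin n → Equiv.Perm (Fin m)) → ℕ :=
    fun τ => dpCount (DPGlue.gluedCover C σ τ h hσ) with hA
  have htot : ∑ τ : Fin n → Equiv.Perm (Fin m), A τ = F * (E ^ n * R) := by
    calc ∑ τ : Fin n → Equiv.Perm (Fin m), A τ
        = ∑ τ : Fin n → Equiv.Perm (Fin m), ∑ f : Fin p → Fin m,
            ∏ i, DPGlue.Mcount (u := u) C σ i (⇑(τ i) ∘ f) :=
          Finset.sum_congr rfl fun τ _ => DPGlue.dpCount_glued C σ τ h hσ i0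
      _ = ∑ f : Fin p → Fin m, ∑ τ : Fin n → Equiv.Perm (Fin m),
            ∏ i, DPGlue.Mcount (u := u) C σ i (⇑(τ i) ∘ f) := Finset.sum_comm
      _ = ∑ f : Fin p → Fin m, ∏ i, ∑ s : Equiv.Perm (Fin m),
            DPGlue.Mcount (u := u) C σ i (⇑s ∘ f) := by
          refine Finset.sum_congr rfl fun f _ => ?_
          rw [Finset.prod_univ_sum, Fintype.piFinset_univ]
      _ = ∑ f : Fin p → Fin m, if Function.Injective f then E ^ n * R else 0 := by
          refine Finset.sum_congr rfl fun f _ => ?_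
          by_cases hf : Function.Injective f
          · rw [if_pos hf]
            have hstep : ∀ i : Fin n, ∑ s : Equiv.Perm (Fin m),
                DPGlue.Mcount (u := u) C σ i (⇑s ∘ f) = E * dpCount (C i) := by
              intro i
              rw [DPGlue.sum_perm_comp (DPGlue.Mcount (u := u) C σ i)
                (fun g hg => DPGlue.Mcount_eq_zero C σ hσ hg) hf,
                ← DPGlue.dpCount_eq_sum_Mcount C σ i]
            rw [Finset.prod_congr rfl fun i _ => hstep i, Finset.prod_mul_distrib,
              Finset.prod_const, Finset.card_univ, Fintype.card_fin, hR]
          · rw [if_neg hf]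
            refine Finset.prod_eq_zero (Finset.mem_univ i0) ?_
            refine Finset.sum_eq_zero fun s _ => ?_
            exact DPGlue.Mcount_eq_zero C σ hσ
              (fun hinj => hf (Function.Injective.of_comp hinj))
      _ = F * (E ^ n * R) := by
          rw [← Finset.sum_filter, Finset.sum_const, smul_eq_mul, DPGlue.card_injective]
  obtain ⟨τs, -, hmin⟩ := Finset.exists_min_image Finset.univ A ⟨fun _ => 1, Finset.mem_univ _⟩
  have hcard : Fintype.card (Fin n → Equiv.Perm (Fin m)) = (E * F) ^ n := by
    rw [Fintype.card_fun, Fintype.card_perm, Fintype.card_fin, Fintype.card_fin]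
    congr 1
    exact (Nat.factorial_mul_descFactorial hm).symm
  have hmin' : A τs * (E ^ n * F ^ n) ≤ F * (E ^ n * R) := by
    calc A τs * (E ^ n * F ^ n) = A τs * (E * F) ^ n := by rw [mul_pow]
      _ = ∑ _τ : Fin n → Equiv.Perm (Fin m), A τs := by
          rw [Finset.sum_const, Finset.card_univ, hcard, smul_eq_mul, mul_comm]
      _ ≤ ∑ τ : Fin n → Equiv.Perm (Fin m), A τ :=
          Finset.sum_le_sum fun τ _ => hmin τ (Finset.mem_univ τ)
      _ = F * (E ^ n * R) := htot
  have hEpos : 0 < E := Nat.factorial_pos _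
  have hFpos : 0 < F := Nat.pos_of_ne_zero fun h0 =>
    absurd (Nat.descFactorial_eq_zero_iff_lt.mp h0) (not_lt.mpr hm)
  have hFn : F ^ n = F ^ (n - 1) * F := by
    rw [← pow_succ]
    congr 1
    omega
  have h3 : A τs * F ^ (n - 1) ≤ R := by
    refine Nat.le_of_mul_le_mul_right ?_ (Nat.mul_pos (pow_pos hEpos n) hFpos)
    calc (A τs * F ^ (n - 1)) * (E ^ n * F) = A τs * (E ^ n * F ^ n) := by rw [hFn]; ring
      _ ≤ F * (E ^ n * R) := hmin'
      _ = R * (E ^ n * F) := by ring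
  have hPD : PDP G m ≤ A τs := Nat.sInf_le ⟨DPGlue.gluedCover C σ τs h hσ, rfl⟩
  calc PDP G m * (∏ i ∈ Finset.range p, (m - i)) ^ (n - 1)
      = PDP G m * F ^ (n - 1) := by rw [hF, Nat.descFactorial_eq_prod_range]
    _ ≤ A τs * F ^ (n - 1) := Nat.mul_le_mul_right _ hPD
    _ ≤ R := h3
    _ = ∏ i : Fin n, PDPK (Gs i) (u i) m := Finset.prod_congr rfl fun i _ => hval i
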